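/- arXiv:2409.16424 — 2 statements merged into one kernel-verified Lean document; each statement's English description precedes it below -/
import Mathlib

section
/- Let C be a positively oriented circle centered at z = i with radius 0 < r < 1, let k ≥ 1 be a natural number, and let c, t be real. Then (1/(2π)) ∮_C cos(c·z·t)·(1+iz)^{-(2k+1)} dz = ((c·t)^{2k}/(2k)!) · cosh(c·t). -/
open Complex

lemma iteratedDeriv_two_mul_cos (k : ℕ) :
    iteratedDeriv (2 * k) Complex.cos = fun x => (-1 : ℂ) ^ k * Complex.cos x := by
  induction k with
  | zero => simp [iteratedDeriv_zero]
  | succ n ih =>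
    have h2 : 2 * (n + 1) = (2 * n) + 1 + 1 := by ring
    have hdd : deriv (deriv Complex.cos) = fun x => -Complex.cos x := by
      rw [Complex.deriv_cos']
      funext x
      rw [deriv.fun_neg]
      simp [Complex.deriv_sin]
    rw [h2, iteratedDeriv_succ', iteratedDeriv_succ', hdd]
    funext x
    have : iteratedDeriv (2 * n) (fun x => -(Complex.cos x)) x
        = -(iteratedDeriv (2 * n) Complex.cos x) := iteratedDeriv_neg _ _ _
    rw [this, ih]
    ring

theorem circleIntegral_cos_odd_pole (r : ℝ) (hr0 : 0 < r) (hr1 : r < 1)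
    (k : ℕ) (hk : 1 ≤ k) (c t : ℝ) :
    (1 / (2 * (Real.pi : ℂ))) *
      (∮ z in C(Complex.I, r),
        Complex.cos (c * z * t) * (1 + Complex.I * z) ^ (-(2 * (k : ℤ) + 1))) =
      ((c : ℂ) * t) ^ (2 * k) / ((2 * k).factorial : ℂ) * Complex.cosh (c * t) := by
  set f : ℂ → ℂ := fun z => Complex.cos (c * z * t) with hf
  have hfd : Differentiable ℂ f := by
    apply Complex.differentiable_cos.comp
    fun_prop
  have hfe : f = fun z => Complex.cos (((c : ℂ) * t) * z) := by
    funext z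
    show Complex.cos (c * z * t) = _
    congr 1
    ring
  have hiter : iteratedDeriv (2 * k) f Complex.I
      = (-1 : ℂ) ^ k * ((c : ℂ) * t) ^ (2 * k) * Complex.cosh ((c : ℂ) * t) := by
    rw [hfe, iteratedDeriv_comp_const_mul (Complex.contDiff_cos.of_le le_top),
      iteratedDeriv_two_mul_cos]
    simp only [Complex.cos_mul_I]
    ring
  set R : NNReal := ⟨r, hr0.le⟩ with hR
  have hRpos : (0 : NNReal) < R := by exact_mod_cast hr0
  have hps := hfd.hasFPowerSeriesOnBall Complex.I hRpos
  have hcoeff := hps.factorial_smul (y := (1 : ℂ)) (2 * k)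
  rw [← iteratedDeriv_eq_iteratedFDeriv] at hcoeff
  have happ := cauchyPowerSeries_apply f Complex.I R (2 * k) 1
  have hRr : (R : ℝ) = r := rfl
  rw [hRr] at happ
  rw [hRr] at hcoeff
  have hint : (∮ z in C(Complex.I, r),
        Complex.cos (c * z * t) * (1 + Complex.I * z) ^ (-(2 * (k : ℤ) + 1)))
      = Complex.I ^ (-(2 * (k : ℤ) + 1)) •
        ∮ z in C(Complex.I, r), (1 / (z - Complex.I)) ^ (2 * k) • (z - Complex.I)⁻¹ • f z := by
    rw [← circleIntegral.integral_smul]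
    apply circleIntegral.integral_congr hr0.le
    intro z hz
    have h1 : (1 : ℂ) + Complex.I * z = Complex.I * (z - Complex.I) := by
      linear_combination Complex.I_sq
    have h2 : (z - Complex.I) ^ (-(2 * (k : ℤ) + 1))
        = ((z - Complex.I)⁻¹) ^ (2 * k) * (z - Complex.I)⁻¹ := by
      rw [show -(2 * (k : ℤ) + 1) = -(((2 * k + 1 : ℕ) : ℤ)) by push_cast; ring,
        zpow_neg, zpow_natCast, ← inv_pow, pow_succ]
    simp only [smul_eq_mul, one_div]
    rw [h1, mul_zpow, h2]
    ring
  rw [hint]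
  rw [smul_eq_mul] at happ ⊢
  rw [nsmul_eq_mul, happ, hiter] at hcoeff
  -- hcoeff : ((2k)! : ℂ) * ((2πI)⁻¹ * J) = (-1)^k * (ct)^(2k) * cosh(ct)
  have hIpow : Complex.I ^ (-(2 * (k : ℤ) + 1)) = ((-1 : ℂ) ^ k)⁻¹ * (-Complex.I) := by
    have h1 : Complex.I ^ (2 * k + 1) = (-1 : ℂ) ^ k * Complex.I := by
      rw [pow_succ, pow_mul, Complex.I_sq]
    rw [show -(2 * (k : ℤ) + 1) = -(((2 * k + 1 : ℕ) : ℤ)) by push_cast; ring,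
      zpow_neg, zpow_natCast, h1, mul_inv, Complex.inv_I]
  rw [hIpow]
  have hfac : ((2 * k).factorial : ℂ) ≠ 0 := Nat.cast_ne_zero.mpr (2 * k).factorial_ne_zero
  have hpi : (Real.pi : ℂ) ≠ 0 := by exact_mod_cast Real.pi_ne_zero
  have hm1 : ((-1 : ℂ) ^ k) ≠ 0 := pow_ne_zero _ (by norm_num)
  have hI : Complex.I ≠ 0 := Complex.I_ne_zero
  have hcosh : Complex.cosh ((c : ℝ) * t) = Complex.cosh ((c : ℂ) * t) := by push_cast; rfl
  rw [hcosh]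
  field_simp at hcoeff ⊢
  linear_combination (-Complex.I) * hcoeff + (-(2:ℂ) * Real.pi * (-1:ℂ)^k * ((c:ℂ)*t)^(2*k) * Complex.cosh ((c:ℂ)*t)) * Complex.I_sq
end

section
/- Let C be a positively oriented circle centered at z = i with radius 0 < r < 1, let k ≥ 1 be a natural number, and let c, t be real. Then (1/(2π)) ∮_C cos(c·z·t)·(1+iz)^{-2k} dz = -((c·t)^{2k-1}/(2k-1)!) · sinh(c·t). -/
open Complex

lemma iter_two_exp (b₁ b₂ : ℂ) (n : ℕ) :
    iteratedDeriv n (fun z : ℂ => (Complex.exp (b₁ * z) + Complex.exp (b₂ * z)) / 2) =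
      fun z : ℂ => (b₁ ^ n * Complex.exp (b₁ * z) + b₂ ^ n * Complex.exp (b₂ * z)) / 2 := by
  induction n with
  | zero => simp
  | succ n ih =>
    rw [iteratedDeriv_succ, ih]
    funext z
    have h1 : HasDerivAt (fun z : ℂ => Complex.exp (b₁ * z)) (Complex.exp (b₁ * z) * b₁) z :=
      by simpa using ((hasDerivAt_id z).const_mul b₁).cexp
    have h2 : HasDerivAt (fun z : ℂ => Complex.exp (b₂ * z)) (Complex.exp (b₂ * z) * b₂) z :=
      by simpa using ((hasDerivAt_id z).const_mul b₂).cexp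
    have h : HasDerivAt
        (fun z : ℂ => (b₁ ^ n * Complex.exp (b₁ * z) + b₂ ^ n * Complex.exp (b₂ * z)) / 2)
        ((b₁ ^ n * (Complex.exp (b₁ * z) * b₁) + b₂ ^ n * (Complex.exp (b₂ * z) * b₂)) / 2) z :=
      ((h1.const_mul _).add (h2.const_mul _)).div_const 2
    rw [h.deriv]
    ring

lemma iter_cos (a : ℂ) (n : ℕ) (x : ℂ) :
    iteratedDeriv n (fun z : ℂ => Complex.cos (a * z)) x =
      ((Complex.I * a) ^ n * Complex.exp (Complex.I * a * x)
        + (-(Complex.I * a)) ^ n * Complex.exp (-(Complex.I * a) * x)) / 2 := by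
  have hfun : (fun z : ℂ => Complex.cos (a * z)) =
      fun z : ℂ => (Complex.exp (Complex.I * a * z) + Complex.exp (-(Complex.I * a) * z)) / 2 := by
    funext z
    rw [Complex.cos]
    ring_nf
  rw [hfun, iter_two_exp]


theorem circleIntegral_cos_even_pole (r : ℝ) (hr0 : 0 < r) (hr1 : r < 1)
    (k : ℕ) (hk : 1 ≤ k) (c t : ℝ) :
    (1 / (2 * (Real.pi : ℂ))) *
      (∮ z in C(Complex.I, r),
        Complex.cos (c * z * t) * (1 + Complex.I * z) ^ (-(2 * (k : ℤ)))) =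
      -(((c : ℂ) * t) ^ (2 * k - 1) / ((2 * k - 1).factorial : ℂ)) * Complex.sinh (c * t) := by
  obtain ⟨m, rfl⟩ : ∃ m, k = m + 1 := ⟨k - 1, (Nat.succ_pred_eq_of_pos hk).symm⟩
  set a : ℂ := (c : ℂ) * t with ha
  set f : ℂ → ℂ := fun z => Complex.cos (a * z) with hf
  -- Step 1: rewrite the integrand
  have hEq : Set.EqOn
      (fun z => Complex.cos (c * z * t) * (1 + Complex.I * z) ^ (-(2 * ((m + 1 : ℕ) : ℤ))))
      (fun z => ((-1 : ℂ) ^ (m + 1)) • (f z * ((z - Complex.I) ^ (2 * (m + 1)))⁻¹))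
      (Metric.sphere Complex.I r) := by
    intro z hz
    have hzI : z ≠ Complex.I := by
      intro h
      rw [Metric.mem_sphere, h, dist_self] at hz
      exact hr0.ne' hz.symm
    simp only [smul_eq_mul]
    have hcz : ((c : ℂ) * z * t) = a * z := by rw [ha]; ring
    have h1 : (1 : ℂ) + Complex.I * z = Complex.I * (z - Complex.I) := by
      rw [mul_sub, Complex.I_mul_I]; ring
    rw [hcz, h1]
    rw [show (-(2 * ((m + 1 : ℕ) : ℤ))) = -((2 * (m + 1) : ℕ) : ℤ) by push_cast; ring]
    rw [zpow_neg, zpow_natCast, mul_pow]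
    rw [show (Complex.I) ^ (2 * (m + 1)) = (-1 : ℂ) ^ (m + 1) by rw [pow_mul, Complex.I_sq]]
    rw [mul_inv, show ((-1 : ℂ) ^ (m + 1))⁻¹ = (-1 : ℂ) ^ (m + 1) by rw [← inv_pow, inv_neg, inv_one]]
    rw [hf]; ring
  rw [circleIntegral.integral_congr hr0.le hEq, circleIntegral.integral_smul]
  -- Step 2: Cauchy formula for the (2m+1)-st derivative
  have hdiff : Differentiable ℂ f := (differentiable_id.const_mul a).ccos
  have hR : (0 : NNReal) < ⟨r, hr0.le⟩ := hr0
  have hps := hdiff.hasFPowerSeriesOnBall Complex.I hR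
  have hfac := hps.factorial_smul (y := (1 : ℂ)) (2 * m + 1)
  rw [← iteratedDeriv_eq_iteratedFDeriv] at hfac
  rw [cauchyPowerSeries_apply] at hfac
  -- Step 3: compute the iterated derivative
  have hiter : iteratedDeriv (2 * m + 1) f Complex.I
      = -((-1 : ℂ) ^ m * Complex.I * a ^ (2 * m + 1) * Complex.sinh a) := by
    rw [hf, iter_cos]
    have e1 : Complex.I * a * Complex.I = -a := by
      rw [mul_comm, ← mul_assoc, Complex.I_mul_I]; ring
    have e2 : -(Complex.I * a) * Complex.I = a := by
      rw [show -(Complex.I * a) * Complex.I = -(Complex.I * a * Complex.I) by ring, e1]; ring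
    rw [e1, e2]
    rw [show (-(Complex.I * a)) ^ (2 * m + 1) = -(Complex.I * a) ^ (2 * m + 1) by
      rw [neg_pow]; simp [pow_succ, pow_mul]]
    rw [show Complex.sinh a = (Complex.exp a - Complex.exp (-a)) / 2 from rfl]
    rw [show (Complex.I * a) ^ (2 * m + 1) = (-1 : ℂ) ^ m * Complex.I * a ^ (2 * m + 1) by
      rw [mul_pow, pow_succ, pow_mul, Complex.I_sq]]
    ring
  -- Step 4: solve for the integral and finish
  have hfact_ne : (((2 * m + 1).factorial : ℕ) : ℂ) ≠ 0 := by
    exact_mod_cast (Nat.factorial_pos _).ne'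
  have hpi : (Real.pi : ℂ) ≠ 0 := by exact_mod_cast Real.pi_ne_zero
  have h2pi : (2 * (Real.pi : ℂ) * Complex.I) ≠ 0 := by simp [hpi, Complex.I_ne_zero]
  have h2k : 2 * (m + 1) - 1 = 2 * m + 1 := by omega
  rw [h2k]
  have hval : (∮ z in C(Complex.I, r), f z * ((z - Complex.I) ^ (2 * (m + 1)))⁻¹)
      = (2 * (Real.pi : ℂ) * Complex.I) * (((2 * m + 1).factorial : ℂ))⁻¹ *
        (-((-1 : ℂ) ^ m * Complex.I * a ^ (2 * m + 1) * Complex.sinh a)) := by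
    rw [← hiter, ← hfac, nsmul_eq_mul, smul_eq_mul]
    rw [show NNReal.toReal ⟨r, hr0.le⟩ = r from rfl]
    field_simp
    have hcong : (∮ (z : ℂ) in C(Complex.I, r), f z / (z - Complex.I) ^ (2 * (m + 1)))
        = ∮ (z : ℂ) in C(Complex.I, r),
            f z / ((z - Complex.I) ^ (2 * m + 1) * (z - Complex.I)) := by
      apply circleIntegral.integral_congr hr0.le
      intro z hz
      simp only
      rw [show 2 * (m + 1) = (2 * m + 1) + 1 by ring, pow_succ]
    rw [hcong]
    congr 1; funext z; rw [smul_eq_mul, smul_eq_mul]; generalize z - Complex.I = w; ring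
  rw [smul_eq_mul, hval, pow_succ]
  have hX : ((-1 : ℂ) ^ m) * ((-1 : ℂ) ^ m) = 1 := by
    rw [← sq, ← pow_mul, mul_comm, pow_mul, neg_one_sq, one_pow]
  field_simp
  linear_combination
    (Complex.I ^ 2 * a ^ (2 * m + 1) * Complex.sinh a) * hX +
      (a ^ (2 * m + 1) * Complex.sinh a) * Complex.I_sq
end
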